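/- Let P ⊆ S̃ be a polarization of m^d all of whose minimal generators are squarefree monomials, with vertices v_i = x_{i1}x_{i2}···x_{id} for i = 1,…,n. Say that a pair (g, m), where g is a minimal generator of P and m is a monomial, is pushed in one step to (g', m') if g' = g·x_{ab}/x_{cl} is again a minimal generator of P (with x_{cl} dividing g), x_{cl} divides m, and m' = m·x_{ab}/x_{cl}; and say (f, m) can be pushed to (h, m̃) if there is a finite chain of such one-step pushes from (f, m) to (h, m̃). If f is a minimal generator of P, m is a monomial, and (f, m) can be pushed to (v_a, m_a) and also to (v_b, m_b) for two distinct indices a ≠ b, then f divides m. In particular, a proper first order deformation f + t·m of a generator f can be pushed successively to at most one vertex of P. -/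

import Mathlib

/-!
Statement 11: Let `P ⊆ S̃` be a squarefree polarization of `m^d`, with vertices
`v_i = x_{i1}x_{i2}⋯x_{id}`.  If a pair `(f, m)` (a minimal generator together with a
monomial) can be pushed (through chains of one-step pushes along linear relations between
minimal generators) to two distinct vertices `v_a` and `v_b`, then `f` divides `m`.
In particular a proper first order deformation `f + t·m` of a generator can be pushed
to at most one vertex of `P`.
-/

set_option synthInstance.maxHeartbeats 800000
set_option maxHeartbeats 1600000

open MvPolynomial

noncomputable section

/-- `f` is a monomial (with coefficient `1`). -/
def IsMonomial (k : Type) [Field k] (σ : Type) (f : MvPolynomial σ k) : Prop :=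
  ∃ u : σ →₀ ℕ, f = monomial u 1

/-- `f` is a squarefree monomial. -/
def IsSqfreeMonomial (k : Type) [Field k] (σ : Type) (f : MvPolynomial σ k) : Prop :=
  ∃ u : σ →₀ ℕ, f = monomial u 1 ∧ ∀ p, u p ≤ 1

/-- `f` is a minimal monomial generator of the monomial ideal `P`. -/
def IsMinGen (k : Type) [Field k] (σ : Type) (P : Ideal (MvPolynomial σ k))
    (f : MvPolynomial σ k) : Prop :=
  IsMonomial k σ f ∧ f ∈ P ∧
    ∀ g : MvPolynomial σ k, IsMonomial k σ g → g ∣ f → g ≠ f → g ∉ P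

/-- The multiset of variable differences `x_{i1} − x_{ij}`, `1 ≤ i ≤ n`, `2 ≤ j ≤ d`. -/
def diffsM (k : Type) [Field k] (n d : ℕ) [NeZero d] :
    Multiset (MvPolynomial (Fin n × Fin d) k) :=
  ((Finset.univ : Finset (Fin n × Fin d)).filter (fun p => p.2 ≠ (0 : Fin d))).val.map
    (fun p => X (p.1, (0 : Fin d)) - X p)

/-- The depolarization map `S̃ → S = k[x₁,…,x_n]`, `x_{ij} ↦ x_i` (i.e. the quotient of
`S̃` by the variable differences). -/
def depol (k : Type) [Field k] (n d : ℕ) :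
    MvPolynomial (Fin n × Fin d) k →+* MvPolynomial (Fin n) k :=
  (MvPolynomial.aeval (fun p : Fin n × Fin d => (X p.1 : MvPolynomial (Fin n) k))).toRingHom

/-- `P ⊆ S̃` is a polarization of `m^d`: the variable differences (in any fixed order) form
a regular sequence on `S̃/P`, and quotienting by them (i.e. applying the depolarization
`x_{ij} ↦ x_i`) carries `P` to `m^d`. -/
def IsPolarization (k : Type) [Field k] (n d : ℕ) [NeZero d]
    (P : Ideal (MvPolynomial (Fin n × Fin d) k)) : Prop :=
  (∀ L : List (MvPolynomial (Fin n × Fin d) k), (↑L : Multiset _) = diffsM k n d →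
    RingTheory.Sequence.IsRegular (MvPolynomial (Fin n × Fin d) k ⧸ P) L) ∧
  Ideal.map (depol k n d) P =
    (Ideal.span (Set.range (X : Fin n → MvPolynomial (Fin n) k))) ^ d

/-- The vertex `v_i = x_{i1}x_{i2}⋯x_{id}`. -/
def vertex (k : Type) [Field k] (n d : ℕ) (i : Fin n) : MvPolynomial (Fin n × Fin d) k :=
  ∏ j : Fin d, X (i, j)

/-- One-step push of a pair (generator, monomial): `(g, m)` is pushed to
`(g·x_{ab}/x_{cl}, m·x_{ab}/x_{cl})`, where `g` and `g·x_{ab}/x_{cl}` are both minimal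
generators of `P` and `x_{cl}` divides both `g` and `m`.
Here `x_{ab} = X p` and `x_{cl} = X q`. -/
def PushStep (k : Type) [Field k] (n d : ℕ) (P : Ideal (MvPolynomial (Fin n × Fin d) k)) :
    (MvPolynomial (Fin n × Fin d) k × MvPolynomial (Fin n × Fin d) k) →
    (MvPolynomial (Fin n × Fin d) k × MvPolynomial (Fin n × Fin d) k) → Prop :=
  fun gm g'm' => ∃ p q : Fin n × Fin d,
    IsMinGen k (Fin n × Fin d) P gm.1 ∧ IsMinGen k (Fin n × Fin d) P g'm'.1 ∧
    X q ∣ gm.1 ∧ g'm'.1 * X q = gm.1 * X p ∧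
    X q ∣ gm.2 ∧ g'm'.2 * X q = gm.2 * X p

/-- The vertex is the monomial with exponent vector `∑ j, e_{(i,j)}`. -/
lemma vertex_eq_monomial (k : Type) [Field k] (n d : ℕ) (i : Fin n) :
    vertex k n d i =
      monomial (∑ j : Fin d, Finsupp.single ((i, j) : Fin n × Fin d) 1) (1 : k) := by
  have h : ∀ s : Finset (Fin d),
      (∏ j ∈ s, (X ((i, j) : Fin n × Fin d) : MvPolynomial (Fin n × Fin d) k)) =
        monomial (∑ j ∈ s, Finsupp.single ((i, j) : Fin n × Fin d) 1) (1 : k) := by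
    intro s
    induction s using Finset.induction with
    | empty => simp [monomial_zero']
    | insert _ _ hns ih =>
        rw [Finset.prod_insert hns, Finset.sum_insert hns, ih]
        rw [show (X ((i, _) : Fin n × Fin d) : MvPolynomial (Fin n × Fin d) k) =
          monomial (Finsupp.single (i, _) 1) 1 from rfl, monomial_mul, one_mul]
  exact h Finset.univ

/-- A chain of pushes preserves the ratio: `f * m' = g * m`. -/
lemma push_invariant (k : Type) [Field k] (n d : ℕ)
    (P : Ideal (MvPolynomial (Fin n × Fin d) k))
    (f m : MvPolynomial (Fin n × Fin d) k)
    (c : MvPolynomial (Fin n × Fin d) k × MvPolynomial (Fin n × Fin d) k)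
    (h : Relation.ReflTransGen (PushStep k n d P) (f, m) c) :
    f * c.2 = c.1 * m := by
  induction h with
  | refl => rfl
  | @tail b c _ hst ih =>
      obtain ⟨p, q, _, _, _, heq, _, heqm⟩ := hst
      have hX : (X q : MvPolynomial (Fin n × Fin d) k) ≠ 0 := X_ne_zero q
      apply mul_right_cancel₀ hX
      calc f * c.2 * X q = f * (c.2 * X q) := by ring
        _ = f * (b.2 * X p) := by rw [heqm]
        _ = (f * b.2) * X p := by ring
        _ = (b.1 * m) * X p := by rw [ih]
        _ = (b.1 * X p) * m := by ring
        _ = (c.1 * X q) * m := by rw [heq]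
        _ = c.1 * m * X q := by ring

theorem statement11 (k : Type) [Field k] (n d : ℕ) [NeZero d]
    (P : Ideal (MvPolynomial (Fin n × Fin d) k))
    (hpol : IsPolarization k n d P)
    (hsf : ∀ g, IsMinGen k (Fin n × Fin d) P g → IsSqfreeMonomial k (Fin n × Fin d) g)
    (f m : MvPolynomial (Fin n × Fin d) k)
    (hf : IsMinGen k (Fin n × Fin d) P f) (hm : IsMonomial k (Fin n × Fin d) m)
    (a b : Fin n) (hab : a ≠ b) (ma mb : MvPolynomial (Fin n × Fin d) k)
    (ha : Relation.ReflTransGen (PushStep k n d P) (f, m) (vertex k n d a, ma))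
    (hb : Relation.ReflTransGen (PushStep k n d P) (f, m) (vertex k n d b, mb)) :
    f ∣ m := by
  obtain ⟨u, hfu, hu1⟩ := hsf f hf
  obtain ⟨w, hmw⟩ := hm
  have hinva : f * ma = vertex k n d a * m := push_invariant k n d P f m _ ha
  have hinvb : f * mb = vertex k n d b * m := push_invariant k n d P f m _ hb
  have hdvda : f ∣ vertex k n d a * m := ⟨ma, hinva.symm⟩
  have hdvdb : f ∣ vertex k n d b * m := ⟨mb, hinvb.symm⟩
  rw [vertex_eq_monomial, hmw, hfu, monomial_mul, mul_one, monomial_dvd_monomial] at hdvda hdvdb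
  have hlea : u ≤ (∑ j : Fin d, Finsupp.single ((a, j) : Fin n × Fin d) 1) + w := by
    rcases hdvda.1 with h | h
    · exact absurd h one_ne_zero
    · exact h
  have hleb : u ≤ (∑ j : Fin d, Finsupp.single ((b, j) : Fin n × Fin d) 1) + w := by
    rcases hdvdb.1 with h | h
    · exact absurd h one_ne_zero
    · exact h
  have hle : u ≤ w := by
    rw [Finsupp.le_def]
    intro p
    by_cases hp : p.1 = a
    · have := Finsupp.le_def.mp hleb p
      have hz : (∑ j : Fin d, Finsupp.single ((b, j) : Fin n × Fin d) 1) p = 0 := by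
        rw [Finsupp.finset_sum_apply]
        apply Finset.sum_eq_zero
        intro j _
        rw [Finsupp.single_apply, if_neg]
        intro hpe
        exact hab (hp ▸ congrArg Prod.fst hpe).symm
      simpa [Finsupp.add_apply, hz] using this
    · have := Finsupp.le_def.mp hlea p
      have hz : (∑ j : Fin d, Finsupp.single ((a, j) : Fin n × Fin d) 1) p = 0 := by
        rw [Finsupp.finset_sum_apply]
        apply Finset.sum_eq_zero
        intro j _
        rw [Finsupp.single_apply, if_neg]
        intro hpe
        exact hp (congrArg Prod.fst hpe).symm
      simpa [Finsupp.add_apply, hz] using this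
  rw [hfu, hmw, monomial_dvd_monomial]
  exact ⟨Or.inr hle, dvd_refl 1⟩

end
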